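/- arXiv:1801.00368 — 5 statements merged into one kernel-verified Lean document; each statement's English description precedes it below -/
import Mathlib

section
/- Let Omega be a subset of {1,...,m} x {1,...,n} and let G be the bipartite graph on vertex sets {rows} and {columns} with an edge (i,j) whenever (i,j) is in Omega. The restriction of the sampling map R_Omega (extracting the entries indexed by Omega) to rank-one m-by-n real matrices with all entries nonzero is injective if and only if G is connected. -/
open Matrix Module

/-- A rank-one matrix decomposes as an outer product. -/
lemma rank_one_decomp {m n : ℕ} (X : Matrix (Fin m) (Fin n) ℝ) (h : X.rank = 1) :
    ∃ (u : Fin m → ℝ) (v : Fin n → ℝ), ∀ i j, X i j = u i * v j := by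
  rw [Matrix.rank_eq_finrank_span_cols, finrank_eq_one_iff'] at h
  obtain ⟨v₀, hv₀, hall⟩ := h
  choose c hc using hall
  refine ⟨fun i => (v₀ : Fin m → ℝ) i,
    fun j => c ⟨Xᵀ j, Submodule.subset_span ⟨j, rfl⟩⟩, fun i j => ?_⟩
  have h1 := hc ⟨Xᵀ j, Submodule.subset_span ⟨j, rfl⟩⟩
  have h2 := congrArg (fun w : (Submodule.span ℝ (Set.range Xᵀ)) => (w : Fin m → ℝ) i) h1
  simp only [Submodule.coe_smul, Pi.smul_apply, smul_eq_mul] at h2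
  rw [mul_comm]
  exact h2.symm

/-- An outer product of nonzero vectors has rank one. -/
lemma rank_outer {m n : ℕ} (u : Fin m → ℝ) (v : Fin n → ℝ) (hu : u ≠ 0) (j0 : Fin n)
    (hv : v j0 ≠ 0) :
    (Matrix.of fun i j => u i * v j : Matrix (Fin m) (Fin n) ℝ).rank = 1 := by
  rw [Matrix.rank_eq_finrank_span_cols]
  have hcol : ∀ j, (Matrix.of fun i j => u i * v j : Matrix (Fin m) (Fin n) ℝ)ᵀ j = v j • u := by
    intro j; funext i; simp [mul_comm]
  have hspan : Submodule.span ℝ (Set.range (Matrix.of fun i j => u i * v j :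
      Matrix (Fin m) (Fin n) ℝ)ᵀ) = Submodule.span ℝ {u} := by
    apply le_antisymm
    · rw [Submodule.span_le]
      rintro _ ⟨j, rfl⟩
      rw [hcol]
      exact Submodule.smul_mem _ _ (Submodule.subset_span rfl)
    · rw [Submodule.span_le, Set.singleton_subset_iff]
      have hmem := Submodule.smul_mem (Submodule.span ℝ (Set.range (Matrix.of fun i j => u i * v j :
        Matrix (Fin m) (Fin n) ℝ)ᵀ)) ((v j0)⁻¹) (Submodule.subset_span ⟨j0, rfl⟩)
      rwa [hcol, smul_smul, inv_mul_cancel₀ hv, one_smul] at hmem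
  change finrank ℝ (Submodule.span ℝ (Set.range (Matrix.of fun i j => u i * v j :
      Matrix (Fin m) (Fin n) ℝ)ᵀ)) = 1
  rw [hspan]
  exact finrank_span_singleton hu

lemma const_of_adj {V : Type*} {G : SimpleGraph V} (hG : G.Connected)
    {f : V → ℝ} (h : ∀ p q, G.Adj p q → f p = f q) (p q : V) : f p = f q := by
  obtain ⟨w⟩ := hG.preconnected p q
  induction w with
  | nil => rfl
  | cons h' _ ih => exact (h _ _ h').trans ih

/-- The bipartite graph on rows and columns with an edge `(i,j)` whenever `(i,j) ∈ Ω`. -/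
def bipartiteGraph (m n : ℕ) (Ω : Set (Fin m × Fin n)) :
    SimpleGraph (Sum (Fin m) (Fin n)) where
  Adj u v :=
    (∃ i j, u = Sum.inl i ∧ v = Sum.inr j ∧ (i, j) ∈ Ω) ∨
    (∃ i j, u = Sum.inr j ∧ v = Sum.inl i ∧ (i, j) ∈ Ω)
  symm := by
    constructor
    rintro u v (⟨i, j, rfl, rfl, h⟩ | ⟨i, j, rfl, rfl, h⟩)
    · exact Or.inr ⟨i, j, rfl, rfl, h⟩
    · exact Or.inl ⟨i, j, rfl, rfl, h⟩
  loopless := by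
    constructor
    rintro u (⟨i, j, rfl, h, _⟩ | ⟨i, j, rfl, h, _⟩) <;> simp at h

/-- The sampling map `R_Ω` is injective on rank-one `m × n` matrices with all nonzero
entries if and only if the bipartite graph associated to `Ω` is connected. -/
theorem rank_one_completion_iff_connected (m n : ℕ) (hm : 0 < m) (hn : 0 < n)
    (Ω : Set (Fin m × Fin n)) :
    (∀ X X' : Matrix (Fin m) (Fin n) ℝ,
        X.rank = 1 → (∀ i j, X i j ≠ 0) →
        X'.rank = 1 → (∀ i j, X' i j ≠ 0) →
        (∀ p ∈ Ω, X p.1 p.2 = X' p.1 p.2) → X = X')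
      ↔ (bipartiteGraph m n Ω).Connected := by
  classical
  set G := bipartiteGraph m n Ω with hGdef
  constructor
  · intro h
    by_contra hnc
    have hne : Nonempty (Sum (Fin m) (Fin n)) := ⟨Sum.inl ⟨0, hm⟩⟩
    rw [SimpleGraph.connected_iff] at hnc
    have hpc : ¬ G.Preconnected := fun hp => hnc ⟨hp, hne⟩
    rw [SimpleGraph.Preconnected] at hpc
    push_neg at hpc
    obtain ⟨a, b, hab⟩ := hpc
    have key : ∃ (i : Fin m) (j : Fin n),
        ¬ (G.Reachable a (Sum.inl i) ↔ G.Reachable a (Sum.inr j)) := by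
      have ha : G.Reachable a a := SimpleGraph.Reachable.refl a
      rcases a with ia | ja <;> rcases b with ib | jb
      · by_cases hj : G.Reachable (Sum.inl ia) (Sum.inr ⟨0, hn⟩)
        · exact ⟨ib, ⟨0, hn⟩, fun hiff => hab (hiff.mpr hj)⟩
        · exact ⟨ia, ⟨0, hn⟩, fun hiff => hj (hiff.mp ha)⟩
      · exact ⟨ia, jb, fun hiff => hab (hiff.mp ha)⟩
      · exact ⟨ib, ja, fun hiff => hab (hiff.mpr ha)⟩
      · by_cases hi : G.Reachable (Sum.inr ja) (Sum.inl ⟨0, hm⟩)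
        · exact ⟨⟨0, hm⟩, jb, fun hiff => hab (hiff.mp hi)⟩
        · exact ⟨⟨0, hm⟩, ja, fun hiff => hi (hiff.mpr ha)⟩
    obtain ⟨i0, j0, hxor⟩ := key
    set c : Fin m → ℝ := fun i => if G.Reachable a (Sum.inl i) then 2 else 1 with hc
    set d : Fin n → ℝ := fun j => if G.Reachable a (Sum.inr j) then 1/2 else 1 with hd
    set c1 : Fin m → ℝ := fun _ => 1 with hc1
    set d1 : Fin n → ℝ := fun _ => 1 with hd1
    set X : Matrix (Fin m) (Fin n) ℝ := Matrix.of fun i j => c1 i * d1 j with hX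
    set X' : Matrix (Fin m) (Fin n) ℝ := Matrix.of fun i j => c i * d j with hX'
    have hcne : ∀ i, c i ≠ 0 := by intro i; simp only [hc]; split <;> norm_num
    have hdne : ∀ j, d j ≠ 0 := by intro j; simp only [hd]; split <;> norm_num
    have hc1ne : c1 ≠ 0 := by
      intro hzero
      have := congrFun hzero ⟨0, hm⟩
      simp [hc1] at this
    have hcne' : c ≠ 0 := by
      intro hzero
      exact hcne ⟨0, hm⟩ (congrFun hzero ⟨0, hm⟩)
    have hrX : X.rank = 1 := rank_outer c1 d1 hc1ne ⟨0, hn⟩ (by simp [hd1])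
    have hrX' : X'.rank = 1 := rank_outer c d hcne' ⟨0, hn⟩ (hdne ⟨0, hn⟩)
    have heq : X = X' := by
      refine h X X' hrX (fun i j => by simp [hX, hc1, hd1]) hrX'
        (fun i j => mul_ne_zero (hcne i) (hdne j)) ?_
      intro p hp
      have hadj : G.Adj (Sum.inl p.1) (Sum.inr p.2) := Or.inl ⟨p.1, p.2, rfl, rfl, hp⟩
      by_cases hr : G.Reachable a (Sum.inl p.1)
      · have hr2 : G.Reachable a (Sum.inr p.2) := hr.trans hadj.reachable
        simp [hX, hX', hc, hd, hc1, hd1, hr, hr2]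
      · have hr2 : ¬ G.Reachable a (Sum.inr p.2) := fun h' =>
          hr (h'.trans hadj.symm.reachable)
        simp [hX, hX', hc, hd, hc1, hd1, hr, hr2]
    have hentry : X i0 j0 = X' i0 j0 := by rw [heq]
    have hone : (1 : ℝ) = c i0 * d j0 := by simpa [hX, hX', hc1, hd1] using hentry
    by_cases h1 : G.Reachable a (Sum.inl i0) <;> by_cases h2 : G.Reachable a (Sum.inr j0)
    · exact hxor ⟨fun _ => h2, fun _ => h1⟩
    · rw [hc, hd] at hone
      simp only [if_pos h1, if_neg h2] at hone
      norm_num at hone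
    · rw [hc, hd] at hone
      simp only [if_neg h1, if_pos h2] at hone
      norm_num at hone
    · exact hxor ⟨fun hh => absurd hh h1, fun hh => absurd hh h2⟩
  · intro hconn X X' hrX hneX hrX' hneX' hagree
    obtain ⟨u, v, huv⟩ := rank_one_decomp X hrX
    obtain ⟨u', v', huv'⟩ := rank_one_decomp X' hrX'
    have hu : ∀ i, u i ≠ 0 := fun i hi => hneX i ⟨0, hn⟩ (by rw [huv, hi, zero_mul])
    have hv : ∀ j, v j ≠ 0 := fun j hj => hneX ⟨0, hm⟩ j (by rw [huv, hj, mul_zero])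
    have hu' : ∀ i, u' i ≠ 0 := fun i hi => hneX' i ⟨0, hn⟩ (by rw [huv', hi, zero_mul])
    have hv' : ∀ j, v' j ≠ 0 := fun j hj => hneX' ⟨0, hm⟩ j (by rw [huv', hj, mul_zero])
    set f : Sum (Fin m) (Fin n) → ℝ :=
      Sum.elim (fun i => u i / u' i) (fun j => v' j / v j) with hf
    have hedge : ∀ p q, G.Adj p q → f p = f q := by
      have base : ∀ i j, (i, j) ∈ Ω → f (Sum.inl i) = f (Sum.inr j) := by
        intro i j hij
        have hagr := hagree (i, j) hij
        rw [huv, huv'] at hagr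
        simp only [hf, Sum.elim_inl, Sum.elim_inr]
        rw [div_eq_div_iff (hu' i) (hv j)]
        linarith [hagr]
      rintro p q (⟨i, j, rfl, rfl, hij⟩ | ⟨i, j, rfl, rfl, hij⟩)
      · exact base i j hij
      · exact (base i j hij).symm
    ext i j
    have hfe := const_of_adj hconn hedge (Sum.inl i) (Sum.inr j)
    simp only [hf, Sum.elim_inl, Sum.elim_inr] at hfe
    rw [div_eq_div_iff (hu' i) (hv j)] at hfe
    rw [huv, huv']
    linarith [hfe]
end

section
/- If the bipartite graph associated to Omega is disconnected, then the sampling map R_Omega is not injective on the set of rank-one matrices with all nonzero entries: there exist two distinct rank-one matrices X, X' with all entries nonzero such that X_{ij} = X'_{ij} for all (i,j) in Omega. -/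
/-- If the bipartite graph associated to `Ω` is disconnected, then `R_Ω` is not injective
on rank-one matrices with all nonzero entries: there exist two distinct rank-one matrices
`X = x yᵀ`, `X' = x' y'ᵀ` with all entries nonzero agreeing on `Ω`. -/
theorem disconnected_not_injective (m n : ℕ) (hm : 0 < m) (hn : 0 < n)
    (Ω : Set (Fin m × Fin n))
    (hdis : ¬ (bipartiteGraph m n Ω).Connected) :
    ∃ (x x' : Fin m → ℝ) (y y' : Fin n → ℝ),
      (∀ i, x i ≠ 0) ∧ (∀ i, x' i ≠ 0) ∧ (∀ j, y j ≠ 0) ∧ (∀ j, y' j ≠ 0) ∧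
      (fun i j => x i * y j) ≠ (fun i j => x' i * y' j) ∧
      (∀ p ∈ Ω, x p.1 * y p.2 = x' p.1 * y' p.2) := by
  classical
  set G := bipartiteGraph m n Ω with hG
  have hne : Nonempty (Sum (Fin m) (Fin n)) := ⟨Sum.inl ⟨0, hm⟩⟩
  have hpre : ¬ G.Preconnected := fun h => hdis ⟨h⟩
  rw [SimpleGraph.Preconnected] at hpre
  push_neg at hpre
  obtain ⟨u, v, huv⟩ := hpre
  set R : Sum (Fin m) (Fin n) → Prop := fun w => G.Reachable u w with hR
  have hiff : ∀ p ∈ Ω, (R (Sum.inl p.1) ↔ R (Sum.inr p.2)) := by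
    intro p hp
    have hadj : G.Adj (Sum.inl p.1) (Sum.inr p.2) := Or.inl ⟨p.1, p.2, rfl, rfl, hp⟩
    exact ⟨fun r => r.trans hadj.reachable, fun r => r.trans hadj.symm.reachable⟩
  -- find a "mixed" pair
  have hmixed : ∃ (i : Fin m) (j : Fin n), ¬ (R (Sum.inl i) ↔ R (Sum.inr j)) := by
    have hu : R u := SimpleGraph.Reachable.refl u
    have hv : ¬ R v := huv
    set i0 : Fin m := ⟨0, hm⟩
    set j0 : Fin n := ⟨0, hn⟩
    by_cases h0 : R (Sum.inl i0) ↔ R (Sum.inr j0)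
    · by_cases hb : R (Sum.inl i0)
      · -- both true; v is not reachable
        cases v with
        | inl i' => exact ⟨i', j0, by tauto⟩
        | inr j' => exact ⟨i0, j', by tauto⟩
      · -- both false; u is reachable
        cases u with
        | inl i' => exact ⟨i', j0, by tauto⟩
        | inr j' => exact ⟨i0, j', by tauto⟩
    · exact ⟨i0, j0, h0⟩
  obtain ⟨i1, j1, hij⟩ := hmixed
  refine ⟨fun i => if R (Sum.inl i) then 2 else 1, fun _ => 1,
          fun j => if R (Sum.inr j) then 1/2 else 1, fun _ => 1,
          ?_, ?_, ?_, ?_, ?_, ?_⟩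
  · intro i; by_cases h : R (Sum.inl i) <;> simp [h]
  · intro i; norm_num
  · intro j; by_cases h : R (Sum.inr j) <;> simp [h]
  · intro j; norm_num
  · intro heq
    have h := congrFun (congrFun heq i1) j1
    simp only at h
    by_cases h1 : R (Sum.inl i1) <;> by_cases h2 : R (Sum.inr j1) <;>
      simp [h1, h2] at h hij <;> norm_num at h
  · intro p hp
    have h := hiff p hp
    by_cases h1 : R (Sum.inl p.1)
    · simp [h1, h.mp h1]
    · have h2 : ¬ R (Sum.inr p.2) := fun r => h1 (h.mpr r)
      simp [h1, h2]
end

section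
/- If the bipartite graph associated to Omega is connected, and X = x y^T, X' = x' y'^T are rank-one matrices with all entries nonzero that agree on Omega, then X = X'. -/
/-- If the bipartite graph associated to `Ω` is connected and `X = x yᵀ`, `X' = x' y'ᵀ`
are rank-one matrices with all nonzero entries agreeing on `Ω`, then `X = X'`. -/
theorem connected_injective (m n : ℕ) (Ω : Set (Fin m × Fin n))
    (hconn : (bipartiteGraph m n Ω).Connected)
    (x x' : Fin m → ℝ) (y y' : Fin n → ℝ)
    (hx : ∀ i, x i ≠ 0) (hx' : ∀ i, x' i ≠ 0)
    (hy : ∀ j, y j ≠ 0) (hy' : ∀ j, y' j ≠ 0)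
    (h : ∀ p ∈ Ω, x p.1 * y p.2 = x' p.1 * y' p.2) :
    ∀ i j, x i * y j = x' i * y' j := by
  set r : Sum (Fin m) (Fin n) → ℝ := fun u =>
    Sum.rec (fun i => x i / x' i) (fun j => y' j / y j) u with hr
  have hadj : ∀ u v, (bipartiteGraph m n Ω).Adj u v → r u = r v := by
    rintro u v (⟨i, j, rfl, rfl, hij⟩ | ⟨i, j, rfl, rfl, hij⟩)
    · have := h (i, j) hij
      show x i / x' i = y' j / y j
      rw [div_eq_div_iff (hx' i) (hy j)]
      linarith [this]
    · have := h (i, j) hij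
      show y' j / y j = x i / x' i
      rw [div_eq_div_iff (hy j) (hx' i)]
      linarith [this]
  have hreach : ∀ u v, (bipartiteGraph m n Ω).Reachable u v → r u = r v := by
    intro u v huv
    obtain ⟨w⟩ := huv
    induction w with
    | nil => rfl
    | cons ha _ ih => exact (hadj _ _ ha).trans ih
  intro i j
  have := hreach (Sum.inl i) (Sum.inr j) (hconn.preconnected _ _)
  replace this : x i / x' i = y' j / y j := this
  rw [div_eq_div_iff (hx' i) (hy j)] at this
  linarith [this]
end

section
/- Let K be a convex cone (the PSD cone) and suppose M0 is feasible for the SDP: minimize Tr(M) subject to A(M) = b, M PSD. If there exists Y = I - Y1 - xi with Y1 in the range of A*, <xi, M - M0> = 0 for all feasible M, Y m0 = 0 where M0 = m0 m0^T, and v^T Y v > 0 for all v not proportional to m0, and additionally the linear map A is injective on T = {m0 v^T + v m0^T : v}, then M0 is the unique minimizer of the SDP. -/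
open scoped BigOperators Matrix

/-- The Frobenius inner product of two real matrices. -/
def frob {N : ℕ} (A B : Matrix (Fin N) (Fin N) ℝ) : ℝ :=
  ∑ i, ∑ j, A i j * B i j

lemma frob_eq_trace {N : ℕ} (A M : Matrix (Fin N) (Fin N) ℝ) :
    frob A M = (A * Mᵀ).trace := by
  simp [frob, Matrix.trace, Matrix.diag, Matrix.mul_apply]

lemma dot_mulVec_eq {N : ℕ} (B Y : Matrix (Fin N) (Fin N) ℝ) (k : Fin N) :
    (B k) ⬝ᵥ Y.mulVec (B k) = (B * Y * Bᵀ) k k := by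
  simp only [Matrix.mul_apply, dotProduct, Matrix.mulVec, Matrix.transpose_apply,
    Finset.mul_sum, Finset.sum_mul]
  rw [Finset.sum_comm]
  exact Finset.sum_congr rfl fun i _ => Finset.sum_congr rfl fun j _ => by ring

lemma frob_rows {N : ℕ} (Y B : Matrix (Fin N) (Fin N) ℝ) :
    frob Y (Bᵀ * B) = ∑ k, (B k) ⬝ᵥ Y.mulVec (B k) := by
  simp only [dot_mulVec_eq]
  rw [frob_eq_trace, Matrix.transpose_mul, Matrix.transpose_transpose,
    ← Matrix.mul_assoc, Matrix.trace_mul_cycle]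
  rfl

lemma frob_sub_left {N : ℕ} (A B C : Matrix (Fin N) (Fin N) ℝ) :
    frob (A - B) C = frob A C - frob B C := by
  simp [frob, sub_mul, Finset.sum_sub_distrib]

lemma frob_sub_right {N : ℕ} (A B C : Matrix (Fin N) (Fin N) ℝ) :
    frob A (B - C) = frob A B - frob A C := by
  simp [frob, mul_sub, Finset.sum_sub_distrib]

lemma frob_one {N : ℕ} (M : Matrix (Fin N) (Fin N) ℝ) : frob 1 M = M.trace := by
  rw [frob_eq_trace, Matrix.one_mul, Matrix.trace_transpose]

lemma vecMulVec_smul_pair {N : ℕ} (m0 : Fin N → ℝ) (s : ℝ) :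
    Matrix.vecMulVec m0 (s • m0) + Matrix.vecMulVec (s • m0) m0
      = (2 * s) • Matrix.vecMulVec m0 m0 := by
  ext i j
  simp [Matrix.vecMulVec_apply]
  ring

/-- Dual-certificate sufficient conditions for unique recovery in the SDP
`min Tr(M)` s.t. `A(M) = A(M0)`, `M ⪰ 0`, where `M0 = m0 m0ᵀ`: if
`Y = I - Y1 - ξ` with `Y1` in the range of `A*`, `⟨ξ, M - M0⟩ = 0` for all feasible `M`,
`Y m0 = 0`, `vᵀ Y v > 0` for all `v` not proportional to `m0`, and `A` is injective on
the tangent space `T = {m0 vᵀ + v m0ᵀ}`, then `M0` is the unique minimizer. -/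
theorem sdp_unique_minimizer (N m : ℕ)
    (A : Matrix (Fin N) (Fin N) ℝ →ₗ[ℝ] (Fin m → ℝ))
    (m0 : Fin N → ℝ)
    (Y Y1 ξ : Matrix (Fin N) (Fin N) ℝ)
    (hY : Y = 1 - Y1 - ξ)
    (hY1 : ∀ M : Matrix (Fin N) (Fin N) ℝ, A M = 0 → frob Y1 M = 0)
    (hξ : ∀ M : Matrix (Fin N) (Fin N) ℝ, M.PosSemidef →
      A M = A (Matrix.vecMulVec m0 m0) → frob ξ (M - Matrix.vecMulVec m0 m0) = 0)
    (hker : Y.mulVec m0 = 0)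
    (hpos : ∀ v : Fin N → ℝ, (¬ ∃ c : ℝ, v = c • m0) → 0 < v ⬝ᵥ Y.mulVec v)
    (hinj : ∀ v v' : Fin N → ℝ,
      A (Matrix.vecMulVec m0 v + Matrix.vecMulVec v m0) =
        A (Matrix.vecMulVec m0 v' + Matrix.vecMulVec v' m0) →
      Matrix.vecMulVec m0 v + Matrix.vecMulVec v m0 =
        Matrix.vecMulVec m0 v' + Matrix.vecMulVec v' m0) :
    ∀ M : Matrix (Fin N) (Fin N) ℝ, M.PosSemidef →
      A M = A (Matrix.vecMulVec m0 m0) → M ≠ Matrix.vecMulVec m0 m0 →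
      (Matrix.vecMulVec m0 m0).trace < M.trace := by
  intro M hM hfeas hne
  set M0 : Matrix (Fin N) (Fin N) ℝ := Matrix.vecMulVec m0 m0 with hM0
  -- quadratic form vanishes on multiples of m0
  have hq0 : ∀ c : ℝ, (c • m0) ⬝ᵥ Y.mulVec (c • m0) = 0 := by
    intro c
    rw [Matrix.mulVec_smul, hker]
    simp
  -- the key trace identity : M.trace - M0.trace = frob Y M
  have hA0 : A (M - M0) = 0 := by rw [map_sub, hfeas, sub_self]
  have hYM0 : frob Y M0 = 0 := by
    have : frob Y M0 = m0 ⬝ᵥ Y.mulVec m0 := by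
      simp [frob, hM0, Matrix.vecMulVec_apply, dotProduct, Matrix.mulVec,
        Finset.mul_sum]
      exact Finset.sum_congr rfl fun i _ => Finset.sum_congr rfl fun j _ => by ring
    rw [this, hker]
    simp
  have hkey : M.trace - M0.trace = frob Y M := by
    have h1 : frob Y (M - M0) = M.trace - M0.trace := by
      rw [hY, frob_sub_left, frob_sub_left, frob_one, hY1 _ hA0, hξ M hM hfeas]
      simp [Matrix.trace_sub]
    have h2 : frob Y (M - M0) = frob Y M := by
      rw [frob_sub_right, hYM0, sub_zero]
    linarith
  -- decompose M = Bᵀ * B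
  obtain ⟨B, hB⟩ : ∃ B : Matrix (Fin N) (Fin N) ℝ, M = star B * B := by
    open scoped MatrixOrder in exact CStarAlgebra.nonneg_iff_eq_star_mul_self.mp hM.nonneg
  have hB' : M = Bᵀ * B := by simpa [Matrix.star_eq_conjTranspose] using hB
  have hsum : frob Y M = ∑ k, (B k) ⬝ᵥ Y.mulVec (B k) := by rw [hB', frob_rows]
  have hnn : ∀ k : Fin N, 0 ≤ (B k) ⬝ᵥ Y.mulVec (B k) := by
    intro k
    by_cases h : ∃ c : ℝ, B k = c • m0
    · obtain ⟨c, hc⟩ := h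
      rw [hc, hq0]
    · exact (hpos _ h).le
  -- if frob Y M = 0 then M is a multiple of M0, contradicting M ≠ M0 via hinj
  have hne0 : frob Y M ≠ 0 := by
    intro h0
    rw [hsum] at h0
    have hz : ∀ k ∈ Finset.univ, (B k) ⬝ᵥ Y.mulVec (B k) = 0 :=
      (Finset.sum_eq_zero_iff_of_nonneg (fun k _ => hnn k)).mp h0
    have hrow : ∀ k : Fin N, ∃ c : ℝ, B k = c • m0 := by
      intro k
      by_contra h
      exact absurd (hz k (Finset.mem_univ k)) (ne_of_gt (hpos _ h))
    choose c hc using hrow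
    set t : ℝ := ∑ k, (c k) ^ 2 with ht
    have hMt : M = t • M0 := by
      ext i j
      rw [hB']
      simp only [Matrix.mul_apply, Matrix.transpose_apply, Matrix.smul_apply, hM0,
        Matrix.vecMulVec_apply, ht, Finset.sum_mul, smul_eq_mul]
      refine Finset.sum_congr rfl fun k _ => ?_
      rw [hc k]
      simp [Pi.smul_apply, smul_eq_mul]
      ring
    have hAt : A (Matrix.vecMulVec m0 ((t/2) • m0) + Matrix.vecMulVec ((t/2) • m0) m0)
        = A (Matrix.vecMulVec m0 ((1/2 : ℝ) • m0) + Matrix.vecMulVec ((1/2 : ℝ) • m0) m0) := by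
      rw [vecMulVec_smul_pair, vecMulVec_smul_pair]
      have h2t : (2 * (t/2)) = t := by ring
      have h21 : (2 * ((1:ℝ)/2)) = 1 := by ring
      rw [h2t, h21, one_smul, ← hM0, ← hMt]
      exact hfeas
    have := hinj _ _ hAt
    rw [vecMulVec_smul_pair, vecMulVec_smul_pair] at this
    have h2t : (2 * (t/2)) = t := by ring
    have h21 : (2 * ((1:ℝ)/2)) = 1 := by ring
    rw [h2t, h21, one_smul, ← hM0] at this
    exact hne (by rw [hMt, this])
  have hge : 0 ≤ frob Y M := by
    rw [hsum]
    exact Finset.sum_nonneg fun k _ => hnn k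
  have : 0 < frob Y M := lt_of_le_of_ne hge (Ne.symm hne0)
  linarith
end

section
/- If H is a symmetric matrix with H_{T-perp} PSD, Y2 symmetric with <H_{T-perp}, (Y2)_{T-perp}> <= 0 and Tr(H) <= 0, then Tr(H_{T-perp}) <= |<H, Y2>|, where H_T denotes projection onto the tangent space T at a rank-one matrix m0 m0^T and I_T = (Y2)_T. -/
open scoped BigOperators Matrix

/-- Orthogonal projection (in the Frobenius inner product) onto the tangent space
`T = {m0 vᵀ + v m0ᵀ : v}` at the rank-one matrix `m0 m0ᵀ`. -/
noncomputable def projT (N : ℕ) (m0 : Fin N → ℝ)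
    (X : Matrix (Fin N) (Fin N) ℝ) : Matrix (Fin N) (Fin N) ℝ :=
  let P := (1 / (∑ i, (m0 i) ^ 2)) • Matrix.vecMulVec m0 m0
  P * X + X * P - P * X * P

namespace TraceAux

variable {N : ℕ}

lemma frob_eq (A B : Matrix (Fin N) (Fin N) ℝ) : frob A B = (Aᵀ * B).trace := by
  rw [Matrix.trace]
  simp only [Matrix.diag_apply, Matrix.mul_apply, Matrix.transpose_apply]
  rw [Finset.sum_comm]
  rfl

lemma Psymm (m0 : Fin N → ℝ) :
    ((1 / (∑ i, (m0 i) ^ 2)) • Matrix.vecMulVec m0 m0)ᵀ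
      = (1 / (∑ i, (m0 i) ^ 2)) • Matrix.vecMulVec m0 m0 := by
  ext i j
  simp [Matrix.vecMulVec_apply, mul_comm]

lemma Pidem (m0 : Fin N → ℝ) :
    ((1 / (∑ i, (m0 i) ^ 2)) • Matrix.vecMulVec m0 m0) *
      ((1 / (∑ i, (m0 i) ^ 2)) • Matrix.vecMulVec m0 m0)
      = (1 / (∑ i, (m0 i) ^ 2)) • Matrix.vecMulVec m0 m0 := by
  set s := ∑ i, (m0 i) ^ 2 with hs
  by_cases h : s = 0
  · have hm : ∀ i, m0 i = 0 := by
      intro i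
      have := (Finset.sum_eq_zero_iff_of_nonneg (fun i _ => sq_nonneg (m0 i))).mp h i (Finset.mem_univ i)
      exact pow_eq_zero_iff two_ne_zero |>.mp this
    have : Matrix.vecMulVec m0 m0 = 0 := by
      ext i j; simp [Matrix.vecMulVec_apply, hm]
    simp [this]
  · ext i j
    simp only [Matrix.mul_apply, Matrix.smul_apply, Matrix.vecMulVec_apply, smul_eq_mul]
    have : ∀ k, 1 / s * (m0 i * m0 k) * (1 / s * (m0 k * m0 j))
        = (1 / s * (m0 i * m0 j)) * (1/s * m0 k ^ 2) := by
      intro k; ring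
    rw [Finset.sum_congr rfl (fun k _ => this k), ← Finset.mul_sum, ← Finset.mul_sum, ← hs]
    field_simp

end TraceAux

/-- If `H` is symmetric with `H_{T⊥}` PSD, `⟨H_{T⊥}, (Y2)_{T⊥}⟩ ≤ 0`, `Tr(H) ≤ 0`,
and `(Y2)_T = I_T`, then `Tr(H_{T⊥}) ≤ |⟨H, Y2⟩|`. -/
theorem trace_Hperp_bound (N : ℕ) (m0 : Fin N → ℝ)
    (H Y2 : Matrix (Fin N) (Fin N) ℝ)
    (hHsymm : H.IsSymm)
    (hHperp : (H - projT N m0 H).PosSemidef)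
    (hinner : frob (H - projT N m0 H) (Y2 - projT N m0 Y2) ≤ 0)
    (htr : H.trace ≤ 0)
    (hYT : projT N m0 Y2 = projT N m0 1) :
    (H - projT N m0 H).trace ≤ |frob H Y2| := by
  set P : Matrix (Fin N) (Fin N) ℝ := (1 / (∑ i, (m0 i) ^ 2)) • Matrix.vecMulVec m0 m0 with hP
  have hPT : Pᵀ = P := TraceAux.Psymm m0
  have hPP : P * P = P := TraceAux.Pidem m0
  have hproj : ∀ X : Matrix (Fin N) (Fin N) ℝ,
      projT N m0 X = P * X + X * P - P * X * P := fun X => rfl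
  -- adjointness of projT w.r.t. frob
  have hadj : ∀ X Y : Matrix (Fin N) (Fin N) ℝ,
      frob (projT N m0 X) Y = frob X (projT N m0 Y) := by
    intro X Y
    rw [TraceAux.frob_eq, TraceAux.frob_eq, hproj, hproj]
    simp only [Matrix.transpose_sub, Matrix.transpose_add, Matrix.transpose_mul, hPT,
      Matrix.sub_mul, Matrix.add_mul, Matrix.mul_sub, Matrix.mul_add,
      Matrix.trace_sub, Matrix.trace_add]
    rw [show P * Xᵀ * Y = P * (Xᵀ * Y) by rw [Matrix.mul_assoc],
      Matrix.trace_mul_comm P (Xᵀ * Y)]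
    rw [show P * (Xᵀ * P) * Y = P * (Xᵀ * (P * Y)) by simp [Matrix.mul_assoc],
      Matrix.trace_mul_comm P (Xᵀ * (P * Y))]
    simp only [Matrix.mul_assoc]
  -- idempotence of projT
  have hidem : ∀ X : Matrix (Fin N) (Fin N) ℝ,
      projT N m0 (projT N m0 X) = projT N m0 X := by
    intro X
    rw [hproj, hproj]
    simp only [Matrix.mul_add, Matrix.add_mul, Matrix.mul_sub, Matrix.sub_mul,
      ← Matrix.mul_assoc, hPP]
    rw [Matrix.mul_assoc X P P, hPP, Matrix.mul_assoc (P * X) P P, hPP]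
    abel
  -- key identity
  have hfrob_sub_l : ∀ A B C : Matrix (Fin N) (Fin N) ℝ,
      frob (A - B) C = frob A C - frob B C := by
    intro A B C
    simp [TraceAux.frob_eq, Matrix.sub_mul]
  have hfrob_sub_r : ∀ A B C : Matrix (Fin N) (Fin N) ℝ,
      frob A (B - C) = frob A B - frob A C := by
    intro A B C
    simp [TraceAux.frob_eq, Matrix.mul_sub]
  have hfrob_one : ∀ A : Matrix (Fin N) (Fin N) ℝ, frob A 1 = A.trace := by
    intro A
    rw [TraceAux.frob_eq, Matrix.mul_one, Matrix.trace_transpose]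
  have key : frob (H - projT N m0 H) (Y2 - projT N m0 Y2)
      = frob H Y2 - (projT N m0 H).trace := by
    rw [hfrob_sub_l, hfrob_sub_r, hfrob_sub_r, hadj H (projT N m0 Y2), hidem,
      hadj H Y2]
    have h1 : frob H (projT N m0 Y2) = (projT N m0 H).trace := by
      rw [hYT, ← hadj H 1, hfrob_one]
    rw [h1]
    ring
  have htrQ : (H - projT N m0 H).trace = H.trace - (projT N m0 H).trace := by
    simp [Matrix.trace_sub]
  have hQHtr : (projT N m0 H).trace = frob H Y2 - frob (H - projT N m0 H) (Y2 - projT N m0 Y2) := by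
    rw [key]; ring
  have h2 : (H - projT N m0 H).trace ≤ - frob H Y2 := by
    rw [htrQ, hQHtr]; linarith
  calc (H - projT N m0 H).trace ≤ - frob H Y2 := h2
    _ ≤ |frob H Y2| := neg_le_abs _
end
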